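/- Let G be a group, H a complex Hilbert space, and suppose for every quadruple (a,b,c,d) ∈ G⁴ with ab = cd we are given an operator λ^{c,d}_{a,b} on H such that λ^{a,b}_{a,b} = 1 and λ^{f,g'}_{a,b} = λ^{f,g'}_{c,d} ∘ λ^{c,d}_{a,b} whenever ab = cd = fg'. Define, on H ⊗ ℂG ⊗ ℂG, the operator 𝒢_g := Σ_{a,b ∈ G} λ^{ag⁻¹, gb}_{a,b} ⊗ |ag⁻¹⟩⟨a| ⊗ |gb⟩⟨b|. Then g ↦ 𝒢_g is a group homomorphism: 𝒢_g ∘ 𝒢_h = 𝒢_{gh} for all g,h ∈ G, and 𝒢_e = 1. -/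
import Mathlib


open scoped TensorProduct

/-- The matrix unit `|c⟩⟨a|` on the group algebra `ℂG = (G →₀ ℂ)`. -/
noncomputable def matrixUnit {G : Type*} (c a : G) :
    (G →₀ ℂ) →ₗ[ℂ] (G →₀ ℂ) :=
  (Finsupp.lsingle c).comp (Finsupp.lapply a)

/-- The Gauss-law operator
`𝒢_g = Σ_{a,b} λ^{ag⁻¹,gb}_{a,b} ⊗ |ag⁻¹⟩⟨a| ⊗ |gb⟩⟨b|` on `H ⊗ ℂG ⊗ ℂG`,
where `lam a b c d` denotes the transition operator `λ^{c,d}_{a,b}`. -/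
noncomputable def gaussOp {G : Type*} [Group G] [Fintype G]
    {H : Type*} [NormedAddCommGroup H] [InnerProductSpace ℂ H] [CompleteSpace H]
    (lam : G → G → G → G → H →ₗ[ℂ] H) (g : G) :
    (H ⊗[ℂ] ((G →₀ ℂ) ⊗[ℂ] (G →₀ ℂ))) →ₗ[ℂ]
      (H ⊗[ℂ] ((G →₀ ℂ) ⊗[ℂ] (G →₀ ℂ))) :=
  ∑ a : G, ∑ b : G,
    TensorProduct.map (lam a b (a * g⁻¹) (g * b))
      (TensorProduct.map (matrixUnit (a * g⁻¹) a) (matrixUnit (g * b) b))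


open Classical in
lemma matrixUnit_comp {G : Type*} (c a c' a' : G) :
    (matrixUnit c a) ∘ₗ (matrixUnit c' a') =
      if a = c' then matrixUnit c a' else 0 := by
  apply LinearMap.ext; intro x
  simp [matrixUnit, Finsupp.single_apply]
  split_ifs with h1 h2 h2 <;> simp_all

open Classical in
lemma matrixUnit_sum {G : Type*} [Fintype G] :
    ∑ a : G, matrixUnit a a = (LinearMap.id : (G →₀ ℂ) →ₗ[ℂ] (G →₀ ℂ)) := by
  apply Finsupp.lhom_ext; intro a v
  simp [matrixUnit, Finsupp.single_apply]
  rw [Finset.sum_eq_single a] <;> simp +contextual [eq_comm]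

lemma map_sum_left {R M N : Type*} [CommRing R] [AddCommGroup M] [Module R M]
    [AddCommGroup N] [Module R N] {ι : Type*} (s : Finset ι) (F : ι → M →ₗ[R] M)
    (g : N →ₗ[R] N) :
    TensorProduct.map (∑ i ∈ s, F i) g = ∑ i ∈ s, TensorProduct.map (F i) g := by
  rw [← TensorProduct.mapBilinear_apply]
  simp [map_sum, TensorProduct.mapBilinear_apply]

lemma map_sum_right {R M N : Type*} [CommRing R] [AddCommGroup M] [Module R M]
    [AddCommGroup N] [Module R N] {ι : Type*} (s : Finset ι) (F : ι → N →ₗ[R] N)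
    (g : M →ₗ[R] M) :
    TensorProduct.map g (∑ i ∈ s, F i) = ∑ i ∈ s, TensorProduct.map g (F i) := by
  rw [← TensorProduct.mapBilinear_apply]
  simp [map_sum, TensorProduct.mapBilinear_apply]

/-- If the transition operators `λ^{c,d}_{a,b}` (defined for `ab = cd`) satisfy
`λ^{a,b}_{a,b} = 1` and the composition law
`λ^{f,g'}_{a,b} = λ^{f,g'}_{c,d} ∘ λ^{c,d}_{a,b}` whenever `ab = cd = fg'`, then
`g ↦ 𝒢_g` is a group homomorphism. -/
lemma gaussOp_apply {G : Type*} [Group G] [Fintype G]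
    {H : Type*} [NormedAddCommGroup H] [InnerProductSpace ℂ H] [CompleteSpace H]
    (lam : G → G → G → G → H →ₗ[ℂ] H) (g : G) (x : H) (p q : G) :
    gaussOp lam g (x ⊗ₜ[ℂ] (Finsupp.single p (1:ℂ) ⊗ₜ[ℂ] Finsupp.single q (1:ℂ)))
      = (lam p q (p * g⁻¹) (g * q) x) ⊗ₜ[ℂ]
        (Finsupp.single (p * g⁻¹) (1:ℂ) ⊗ₜ[ℂ] Finsupp.single (g * q) (1:ℂ)) := by
  classical
  unfold gaussOp
  simp only [LinearMap.sum_apply, TensorProduct.map_tmul]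
  rw [Finset.sum_eq_single p]
  · rw [Finset.sum_eq_single q]
    · simp [matrixUnit]
    · intro b _ hb
      simp [matrixUnit, Finsupp.single_apply, hb.symm]
    · simp
  · intro a _ ha
    apply Finset.sum_eq_zero; intro b _
    simp [matrixUnit, Finsupp.single_apply, ha.symm]
  · simp

theorem gaussOp_homomorphism {G : Type*} [Group G] [Fintype G]
    {H : Type*} [NormedAddCommGroup H] [InnerProductSpace ℂ H] [CompleteSpace H]
    (lam : G → G → G → G → H →ₗ[ℂ] H)
    (hid : ∀ a b : G, lam a b a b = LinearMap.id)
    (hcomp : ∀ a b c d f g' : G, a * b = c * d → c * d = f * g' →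
      lam a b f g' = (lam c d f g') ∘ₗ (lam a b c d)) :
    (∀ g h : G, (gaussOp lam g) ∘ₗ (gaussOp lam h) = gaussOp lam (g * h)) ∧
      gaussOp lam (1 : G) = LinearMap.id := by
  constructor
  · intro g h
    ext x p q
    simp only [LinearMap.comp_apply, TensorProduct.AlgebraTensorModule.curry_apply,
      TensorProduct.curry_apply, LinearMap.coe_restrictScalars, LinearMap.comp_apply, Finsupp.lsingle_apply]
    rw [gaussOp_apply, gaussOp_apply, gaussOp_apply]
    have h1 : p * h⁻¹ * g⁻¹ = p * (g * h)⁻¹ := by group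
    have h2 : g * (h * q) = g * h * q := by group
    rw [h1, h2]
    congr 1
    rw [hcomp p q (p * h⁻¹) (h * q) (p * (g*h)⁻¹) (g*h*q) (by group) (by group)]
    simp only [LinearMap.comp_apply]

  · ext x p q
    simp only [TensorProduct.AlgebraTensorModule.curry_apply,
      TensorProduct.curry_apply, LinearMap.coe_restrictScalars, LinearMap.comp_apply, Finsupp.lsingle_apply]
    rw [gaussOp_apply]
    simp [hid]
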